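/- Let h₁ > 0 and P(r) = r √(h₁ + (1+r²)^{-1}) for r > 0. Then P''(r) has exactly one positive root, namely r₀ = √(1 + √(4 + 3/h₁)), and moreover P'''(r₀) ≠ 0. -/

import Mathlib

noncomputable def myF1 (h₁ : ℝ) : ℝ → ℝ := fun r =>
  Real.sqrt (h₁ + (1 + r ^ 2)⁻¹) - r ^ 2 / ((1 + r ^ 2) ^ 2 * Real.sqrt (h₁ + (1 + r ^ 2)⁻¹))

noncomputable def myQ (h₁ : ℝ) (r : ℝ) : ℝ := h₁ * ((r ^ 2 - 1) ^ 2 - 4) - 3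

noncomputable def myF2 (h₁ : ℝ) : ℝ → ℝ := fun r =>
  r * myQ h₁ r / ((1 + r ^ 2) ^ 4 * Real.sqrt (h₁ + (1 + r ^ 2)⁻¹) ^ 3)

lemma hs_pos (h₁ r : ℝ) : (0:ℝ) < 1 + r ^ 2 := by positivity

lemma hu_pos {h₁ : ℝ} (hh : 0 < h₁) (r : ℝ) : 0 < h₁ + (1 + r ^ 2)⁻¹ := by positivity

lemma hw_pos {h₁ : ℝ} (hh : 0 < h₁) (r : ℝ) : 0 < Real.sqrt (h₁ + (1 + r ^ 2)⁻¹) :=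
  Real.sqrt_pos.2 (hu_pos hh r)

lemma hu_deriv (h₁ r : ℝ) :
    HasDerivAt (fun r : ℝ => h₁ + (1 + r ^ 2)⁻¹) (-(2 * r) / (1 + r ^ 2) ^ 2) r := by
  have h1 : HasDerivAt (fun r : ℝ => 1 + r ^ 2) (2 * r) r := by
    simpa using (hasDerivAt_pow 2 r).const_add 1
  simpa using (h1.inv (ne_of_gt (hs_pos h₁ r))).const_add h₁

lemma hsq_deriv {h₁ : ℝ} (hh : 0 < h₁) (r : ℝ) :
    HasDerivAt (fun r : ℝ => Real.sqrt (h₁ + (1 + r ^ 2)⁻¹))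
      (-r / ((1 + r ^ 2) ^ 2 * Real.sqrt (h₁ + (1 + r ^ 2)⁻¹))) r := by
  have h := (hu_deriv h₁ r).sqrt (ne_of_gt (hu_pos hh r))
  convert h using 1
  have hw := (hw_pos hh r).ne'
  have hs := (hs_pos h₁ r).ne'
  field_simp

lemma hP_deriv {h₁ : ℝ} (hh : 0 < h₁) (r : ℝ) :
    HasDerivAt (fun r : ℝ => r * Real.sqrt (h₁ + (1 + r ^ 2)⁻¹)) (myF1 h₁ r) r := by
  have h := (hasDerivAt_id r).fun_mul (hsq_deriv hh r)
  refine h.congr_deriv (Eq.symm ?_)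
  have hw := (hw_pos hh r).ne'
  have hs := (hs_pos h₁ r).ne'
  simp only [myF1, id]
  field_simp
  ring

lemma hF1_deriv {h₁ : ℝ} (hh : 0 < h₁) (r : ℝ) :
    HasDerivAt (myF1 h₁) (myF2 h₁ r) r := by
  have hw := (hw_pos hh r).ne'
  have hs := (hs_pos h₁ r).ne'
  have hden : HasDerivAt (fun r : ℝ => (1 + r ^ 2) ^ 2 * Real.sqrt (h₁ + (1 + r ^ 2)⁻¹))
      ((2 * (1 + r ^ 2) * (2 * r)) * Real.sqrt (h₁ + (1 + r ^ 2)⁻¹)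
        + (1 + r ^ 2) ^ 2 * (-r / ((1 + r ^ 2) ^ 2 * Real.sqrt (h₁ + (1 + r ^ 2)⁻¹)))) r := by
    have h1 : HasDerivAt (fun r : ℝ => 1 + r ^ 2) (2 * r) r := by
      simpa using (hasDerivAt_pow 2 r).const_add 1
    have h2 : HasDerivAt (fun r : ℝ => (1 + r ^ 2) ^ 2) (2 * (1 + r ^ 2) * (2 * r)) r := by
      simpa using h1.fun_pow 2
    exact h2.mul (hsq_deriv hh r)
  have hden0 : (1 + r ^ 2) ^ 2 * Real.sqrt (h₁ + (1 + r ^ 2)⁻¹) ≠ 0 := by positivity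
  have hnum : HasDerivAt (fun r : ℝ => r ^ 2) (2 * r) r := by
    simpa using hasDerivAt_pow 2 r
  have hfrac := hnum.fun_div hden hden0
  have h := (hsq_deriv hh r).fun_sub hfrac
  refine h.congr_deriv (Eq.symm ?_)
  have hrel : Real.sqrt (h₁ + (1 + r ^ 2)⁻¹) ^ 2 * (1 + r ^ 2) = h₁ * (1 + r ^ 2) + 1 := by
    rw [Real.sq_sqrt (hu_pos hh r).le]; field_simp
  simp only [myF2, myQ]
  generalize hg : Real.sqrt (h₁ + (1 + r ^ 2)⁻¹) = w at hrel hw ⊢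
  field_simp
  linear_combination (3*r - r^3) * hrel

lemma hF2_deriv_at {h₁ : ℝ} (hh : 0 < h₁) (r : ℝ) :
    HasDerivAt (myF2 h₁)
      (((myQ h₁ r + r * (h₁ * (2 * (r ^ 2 - 1) * (2 * r)))) *
          ((1 + r ^ 2) ^ 4 * Real.sqrt (h₁ + (1 + r ^ 2)⁻¹) ^ 3) -
        r * myQ h₁ r *
          ((4 * (1 + r ^ 2) ^ 3 * (2 * r)) * Real.sqrt (h₁ + (1 + r ^ 2)⁻¹) ^ 3 +
            (1 + r ^ 2) ^ 4 *
              (3 * Real.sqrt (h₁ + (1 + r ^ 2)⁻¹) ^ 2 *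
                (-r / ((1 + r ^ 2) ^ 2 * Real.sqrt (h₁ + (1 + r ^ 2)⁻¹)))))) /
        ((1 + r ^ 2) ^ 4 * Real.sqrt (h₁ + (1 + r ^ 2)⁻¹) ^ 3) ^ 2) r := by
  have h1 : HasDerivAt (fun r : ℝ => 1 + r ^ 2) (2 * r) r := by
    simpa using (hasDerivAt_pow 2 r).const_add 1
  have hq : HasDerivAt (fun r : ℝ => myQ h₁ r) (h₁ * (2 * (r ^ 2 - 1) * (2 * r))) r := by
    have h2 : HasDerivAt (fun r : ℝ => (r ^ 2 - 1) ^ 2) (2 * (r ^ 2 - 1) * (2 * r)) r := by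
      simpa using ((hasDerivAt_pow 2 r).sub_const 1).fun_pow 2
    simpa [myQ] using ((h2.sub_const 4).const_mul h₁).sub_const 3
  have hA : HasDerivAt (fun r : ℝ => r * myQ h₁ r)
      (1 * myQ h₁ r + r * (h₁ * (2 * (r ^ 2 - 1) * (2 * r)))) r := (hasDerivAt_id r).mul hq
  have hp4 : HasDerivAt (fun r : ℝ => (1 + r ^ 2) ^ 4) (4 * (1 + r ^ 2) ^ 3 * (2 * r)) r := by
    simpa using h1.fun_pow 4
  have hw3 : HasDerivAt (fun r : ℝ => Real.sqrt (h₁ + (1 + r ^ 2)⁻¹) ^ 3)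
      (3 * Real.sqrt (h₁ + (1 + r ^ 2)⁻¹) ^ 2 *
        (-r / ((1 + r ^ 2) ^ 2 * Real.sqrt (h₁ + (1 + r ^ 2)⁻¹)))) r := by
    simpa using (hsq_deriv hh r).fun_pow 3
  have hD := hp4.fun_mul hw3
  have hD0 : (1 + r ^ 2) ^ 4 * Real.sqrt (h₁ + (1 + r ^ 2)⁻¹) ^ 3 ≠ 0 := by
    have := hw_pos hh r; positivity
  have := hA.fun_div hD hD0
  unfold myF2
  simpa [myF2, one_mul] using this

/-- The dispersion relation `P(r) = r√(h₁+(1+r²)⁻¹)`: `P''` has exactly one positive root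
`r₀ = √(1+√(4+3/h₁))` and `P'''(r₀) ≠ 0`. -/
theorem stmt14 (h₁ : ℝ) (hh : 0 < h₁) :
    let P : ℝ → ℝ := fun r => r * Real.sqrt (h₁ + (1 + r ^ 2)⁻¹)
    let r₀ : ℝ := Real.sqrt (1 + Real.sqrt (4 + 3 / h₁))
    (∀ r : ℝ, 0 < r → (iteratedDeriv 2 P r = 0 ↔ r = r₀)) ∧
      iteratedDeriv 3 P r₀ ≠ 0 := by
  intro P r₀
  -- basic constants
  have h43 : (0:ℝ) < 4 + 3 / h₁ := by positivity
  set c : ℝ := Real.sqrt (4 + 3 / h₁) with hc_def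
  have hc2 : c ^ 2 = 4 + 3 / h₁ := Real.sq_sqrt h43.le
  have hcgt2 : 2 < c := by
    rw [hc_def, show (2:ℝ) = Real.sqrt 4 by
      rw [show (4:ℝ) = 2 ^ 2 by norm_num, Real.sqrt_sq (by norm_num)]]
    exact Real.sqrt_lt_sqrt (by norm_num) (by have := div_pos (show (0:ℝ) < 3 by norm_num) hh; linarith)
  have hr0sq : r₀ ^ 2 = 1 + c := Real.sq_sqrt (by linarith)
  have hr0pos : 0 < r₀ := Real.sqrt_pos.2 (by linarith)
  have hQr0 : myQ h₁ r₀ = 0 := by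
    simp only [myQ, hr0sq]
    have : (1 + c - 1) ^ 2 = 4 + 3 / h₁ := by rw [← hc2]; ring
    rw [this]
    field_simp
    ring
  -- iterated derivatives
  have hdP : deriv P = myF1 h₁ := funext fun r => (hP_deriv hh r).deriv
  have hdF1 : deriv (myF1 h₁) = myF2 h₁ := funext fun r => (hF1_deriv hh r).deriv
  have hit2 : iteratedDeriv 2 P = myF2 h₁ := by
    rw [show (2:ℕ) = 1 + 1 from rfl, iteratedDeriv_succ, iteratedDeriv_one, hdP, hdF1]
  have hit3 : iteratedDeriv 3 P = deriv (myF2 h₁) := by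
    rw [show (3:ℕ) = 2 + 1 from rfl, iteratedDeriv_succ, hit2]
  constructor
  · intro r hr
    rw [hit2]
    have hwr := hw_pos hh r
    have hD0 : (0:ℝ) < (1 + r ^ 2) ^ 4 * Real.sqrt (h₁ + (1 + r ^ 2)⁻¹) ^ 3 := by positivity
    constructor
    · intro h0
      have hnum : r * myQ h₁ r = 0 := by
        rcases div_eq_zero_iff.1 h0 with h | h
        · exact h
        · exact absurd h hD0.ne'
      have hQ : myQ h₁ r = 0 := by
        rcases mul_eq_zero.1 hnum with h | h
        · exact absurd h hr.ne'
        · exact h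
      -- (r²-1)² = c², and r²-1+c > 0, so r² = 1+c = r₀²
      have hsq : (r ^ 2 - 1) ^ 2 = c ^ 2 := by
        rw [hc2]
        have : h₁ * ((r ^ 2 - 1) ^ 2 - 4) = 3 := by simp only [myQ] at hQ; linarith
        field_simp
        nlinarith [this]
      have hfac : (r ^ 2 - 1 - c) * (r ^ 2 - 1 + c) = 0 := by linear_combination hsq
      have hpos : 0 < r ^ 2 - 1 + c := by nlinarith
      have hr2 : r ^ 2 = r₀ ^ 2 := by
        rcases mul_eq_zero.1 hfac with h | h
        · rw [hr0sq]; linarith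
        · linarith
      have : (r - r₀) * (r + r₀) = 0 := by linear_combination hr2
      rcases mul_eq_zero.1 this with h | h
      · linarith
      · linarith
    · intro h
      subst h
      simp [myF2, hQr0]
  · rw [hit3, (hF2_deriv_at hh r₀).deriv]
    have hwr := hw_pos hh r₀
    have hD0 : (0:ℝ) < (1 + r₀ ^ 2) ^ 4 * Real.sqrt (h₁ + (1 + r₀ ^ 2)⁻¹) ^ 3 := by positivity
    rw [hQr0]
    have hnum : 0 < (0 + r₀ * (h₁ * (2 * (r₀ ^ 2 - 1) * (2 * r₀)))) := by
      have : 0 < r₀ ^ 2 - 1 := by rw [hr0sq]; linarith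
      nlinarith [mul_pos (mul_pos hr0pos hr0pos) (mul_pos hh this)]
    intro hcon
    rw [mul_zero, zero_mul, sub_zero, div_eq_zero_iff] at hcon
    rcases hcon with h | h
    · exact absurd h (mul_ne_zero hnum.ne' hD0.ne')
    · exact absurd h (pow_ne_zero 2 hD0.ne')
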